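/- Let f, g be orientation-preserving homeomorphisms of ℝ with f∘g = g⁻¹∘f. Suppose (u,v) is an open interval (possibly with u = −∞ or v = +∞) on which g has no fixed points and whose finite endpoints are fixed by g. Then f((u,v)) ∩ (u,v) = ∅. -/
import Mathlib


/-- Let `f, g` be orientation-preserving homeomorphisms of `ℝ` with `f ∘ g = g⁻¹ ∘ f`.
If `I` is the open interval with endpoints `u, v ∈ EReal` (possibly infinite), `I` is a
nonempty proper subset of `ℝ` on which `g` has no fixed points and whose finite endpoints
are fixed by `g`, then `f(I) ∩ I = ∅`. -/
theorem stmt_6 (f g : ℝ ≃o ℝ) (hrel : ∀ x : ℝ, f (g x) = g⁻¹ (f x))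
    (u v : EReal) (huv : u < v)
    (I : Set ℝ) (hI : I = {x : ℝ | u < (x : EReal) ∧ (x : EReal) < v})
    (hne : I.Nonempty) (hproper : I ≠ Set.univ)
    (hnofix : ∀ x ∈ I, g x ≠ x)
    (hu : ∀ x : ℝ, (x : EReal) = u → g x = x)
    (hv : ∀ x : ℝ, (x : EReal) = v → g x = x) :
    (f '' I) ∩ I = ∅ := by
  have ginv : ∀ y : ℝ, g⁻¹ y = g.symm y := fun y => rfl
  have hconv : ∀ {x y z : ℝ}, x ∈ I → y ∈ I → x ≤ z → z ≤ y → z ∈ I := by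
    intro x y z hx hy hxz hzy
    subst hI
    exact ⟨lt_of_lt_of_le hx.1 (by exact_mod_cast hxz),
      lt_of_le_of_lt (by exact_mod_cast hzy) hy.2⟩
  have hcont : Continuous fun t : ℝ => g t - t := (OrderIso.continuous g).sub continuous_id
  have hsign : (∀ x ∈ I, x < g x) ∨ (∀ x ∈ I, g x < x) := by
    by_contra hc
    push_neg at hc
    obtain ⟨⟨x, hxI, hxle⟩, ⟨y, hyI, hyle⟩⟩ := hc
    have hx' : g x < x := lt_of_le_of_ne hxle (hnofix x hxI)
    have hy' : y < g y := lt_of_le_of_ne (le_of_not_gt (by exact fun h => absurd hyle h.not_ge))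
      (Ne.symm (hnofix y hyI))
    rcases le_total x y with h | h
    · have := intermediate_value_Icc h hcont.continuousOn
      have h0 : (0 : ℝ) ∈ Set.Icc (g x - x) (g y - y) :=
        ⟨by linarith, by linarith⟩
      obtain ⟨z, hz, hz0⟩ := this h0
      exact hnofix z (hconv hxI hyI hz.1 hz.2) (by simpa [sub_eq_zero] using hz0)
    · have := intermediate_value_Icc' h hcont.continuousOn
      have h0 : (0 : ℝ) ∈ Set.Icc (g x - x) (g y - y) :=
        ⟨by linarith, by linarith⟩
      obtain ⟨z, hz, hz0⟩ := this h0
      exact hnofix z (hconv hyI hxI hz.1 hz.2) (by simpa [sub_eq_zero] using hz0)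
  rw [Set.eq_empty_iff_forall_notMem]
  rintro a ⟨⟨x, hxI, rfl⟩, haI⟩
  have key := hrel x
  rcases hsign with hpos | hneg
  · have h1 : f x < f (g x) := f.strictMono (hpos x hxI)
    have h2 : g.symm (f x) < f x := by
      have := hpos (f x) haI
      have := g.symm.strictMono this
      simpa using this
    rw [key, ginv] at h1
    linarith
  · have h1 : f (g x) < f x := f.strictMono (hneg x hxI)
    have h2 : f x < g.symm (f x) := by
      have := hneg (f x) haI
      have := g.symm.strictMono this
      simpa using this
    rw [key, ginv] at h1
    linarith
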